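/- Let k ≥ 3 be an integer, let α be a real number with k−1 < α ≤ k, let a ≥ 0 and t ≥ 0 be real numbers. Then Σ_{ℓ=0}^∞ aˡ t^{αℓ+k−1}/Γ(αℓ + k) ≤ t^{k−α} · Σ_{ℓ=0}^∞ aˡ t^{(ℓ+1)α−1}/Γ((ℓ+1)α). -/

import Mathlib

/-- Scalar form of the first inequality of Lemma 2.2(iii): for `k ≥ 3`,
`k−1 < α ≤ k`, `a ≥ 0` and `t ≥ 0`,
`Σ_ℓ aˡ t^{αℓ+k−1}/Γ(αℓ+k) ≤ t^{k−α} Σ_ℓ aˡ t^{(ℓ+1)α−1}/Γ((ℓ+1)α)`. -/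
theorem phi_alpha_km1_le (k : ℕ) (hk : 3 ≤ k) (α : ℝ)
    (hα1 : (k : ℝ) - 1 < α) (hα2 : α ≤ (k : ℝ)) (a t : ℝ) (ha : 0 ≤ a) (ht : 0 ≤ t) :
    (∑' ℓ : ℕ, a ^ ℓ * t ^ (α * ℓ + k - 1) / Real.Gamma (α * ℓ + k)) ≤
      t ^ ((k : ℝ) - α) *
        ∑' ℓ : ℕ, a ^ ℓ * t ^ ((ℓ + 1) * α - 1) / Real.Gamma ((ℓ + 1) * α) := by
  have hk3 : (3 : ℝ) ≤ (k : ℝ) := by exact_mod_cast hk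
  have hα2' : (2 : ℝ) ≤ α := by linarith
  -- Gamma positivity facts
  have hGpos : ∀ ℓ : ℕ, 0 < Real.Gamma ((ℓ + 1) * α) := fun ℓ => by
    apply Real.Gamma_pos_of_pos
    have h0 : (0 : ℝ) ≤ (ℓ : ℝ) := Nat.cast_nonneg _
    nlinarith
  have hGpos2 : ∀ ℓ : ℕ, 0 < Real.Gamma (α * ℓ + k) := fun ℓ => by
    apply Real.Gamma_pos_of_pos
    have h0 : (0 : ℝ) ≤ (ℓ : ℝ) := Nat.cast_nonneg _
    nlinarith
  have hmono := Real.Gamma_strictMonoOn_Ici.monotoneOn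
  -- Γ((ℓ+1)α) ≤ Γ(αℓ + k)
  have hGle : ∀ ℓ : ℕ, Real.Gamma ((ℓ + 1) * α) ≤ Real.Gamma (α * ℓ + k) := fun ℓ => by
    have h0 : (0 : ℝ) ≤ (ℓ : ℝ) := Nat.cast_nonneg _
    have h1 : (2 : ℝ) ≤ (ℓ + 1) * α := by nlinarith
    have h2 : (ℓ + 1 : ℝ) * α ≤ α * ℓ + k := by nlinarith
    exact hmono (Set.mem_Ici.2 h1) (Set.mem_Ici.2 (le_trans h1 h2)) h2
  rcases eq_or_lt_of_le ht with rfl | ht0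
  · -- t = 0 : both sides vanish
    have hL : ∀ ℓ : ℕ, a ^ ℓ * (0:ℝ) ^ (α * ℓ + k - 1) / Real.Gamma (α * ℓ + k) = 0 := by
      intro ℓ
      rw [Real.zero_rpow (by have h0 : (0 : ℝ) ≤ (ℓ : ℝ) := Nat.cast_nonneg _; nlinarith)]
      simp
    have hR : ∀ ℓ : ℕ, a ^ ℓ * (0:ℝ) ^ ((ℓ + 1) * α - 1) / Real.Gamma ((ℓ + 1) * α) = 0 := by
      intro ℓ
      rw [Real.zero_rpow (by have h0 : (0 : ℝ) ≤ (ℓ : ℝ) := Nat.cast_nonneg _; nlinarith)]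
      simp
    simp only [hL, hR, tsum_zero, mul_zero, le_refl]
  · -- t > 0
    set f : ℕ → ℝ := fun ℓ => a ^ ℓ * t ^ (α * ℓ + k - 1) / Real.Gamma (α * ℓ + k)
    set g : ℕ → ℝ := fun ℓ =>
      t ^ ((k : ℝ) - α) * (a ^ ℓ * t ^ ((ℓ + 1) * α - 1) / Real.Gamma ((ℓ + 1) * α))
    have hfg : ∀ ℓ, f ℓ ≤ g ℓ := fun ℓ => by
      have hnum : t ^ ((k : ℝ) - α) * t ^ ((ℓ + 1) * α - 1) = t ^ (α * ℓ + k - 1) := by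
        rw [← Real.rpow_add ht0]; ring_nf
      have : g ℓ = a ^ ℓ * t ^ (α * ℓ + k - 1) / Real.Gamma ((ℓ + 1) * α) := by
        simp only [g]; rw [← hnum]; ring
      rw [this]
      apply div_le_div_of_nonneg_left _ (hGpos ℓ) (hGle ℓ)
      positivity
    -- summability of g by comparison with exponential series
    have hg : Summable g := by
      apply Summable.mul_left
      have hbound : ∀ ℓ : ℕ,
          ‖a ^ ℓ * t ^ ((ℓ + 1) * α - 1) / Real.Gamma ((ℓ + 1) * α)‖ ≤
            t ^ (α - 1) * ((a * t ^ α) ^ ℓ / (Nat.factorial ℓ)) := by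
        intro ℓ
        have h0 : (0 : ℝ) ≤ (ℓ : ℝ) := Nat.cast_nonneg _
        have hterm : (0:ℝ) ≤ a ^ ℓ * t ^ ((ℓ + 1) * α - 1) / Real.Gamma ((ℓ + 1) * α) := by
          have := (hGpos ℓ).le; positivity
        rw [Real.norm_eq_abs, abs_of_nonneg hterm]
        have hfac : (Real.Gamma ((ℓ:ℝ) + 2) : ℝ) ≤ Real.Gamma ((ℓ + 1) * α) := by
          apply hmono (Set.mem_Ici.2 (by linarith)) (Set.mem_Ici.2 (by nlinarith)) (by nlinarith)
        have hfacval : Real.Gamma ((ℓ:ℝ) + 2) = ((Nat.factorial (ℓ+1) : ℝ)) := by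
          rw [show ((ℓ:ℝ) + 2) = ((ℓ + 1 : ℕ) : ℝ) + 1 by push_cast; ring,
            Real.Gamma_nat_eq_factorial]
        have hfle : (((Nat.factorial ℓ) : ℕ) : ℝ) ≤ Real.Gamma ((ℓ + 1) * α) := by
          rw [hfacval] at hfac
          refine le_trans ?_ hfac
          exact_mod_cast Nat.factorial_le (Nat.le_succ ℓ)
        have hfpos : (0:ℝ) < ((Nat.factorial ℓ) : ℝ) := by exact_mod_cast Nat.factorial_pos ℓ
        have htpow : t ^ ((ℓ + 1) * α - 1) = t ^ (α - 1) * (t ^ α) ^ ℓ := by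
          rw [← Real.rpow_natCast (t ^ α) ℓ, ← Real.rpow_mul ht0.le, ← Real.rpow_add ht0]
          ring_nf
        rw [htpow]
        refine le_trans (div_le_div_of_nonneg_left (by positivity) hfpos hfle) (le_of_eq ?_)
        ring
      apply Summable.of_norm_bounded (((Real.summable_pow_div_factorial (a * t ^ α)).mul_left
        (t ^ (α - 1)))) hbound
    have hf : Summable f := by
      apply Summable.of_nonneg_of_le _ hfg hg
      intro ℓ
      have := (hGpos2 ℓ).le
      simp only [f]; positivity
    have heq : ∑' ℓ, g ℓ =
        t ^ ((k : ℝ) - α) * ∑' ℓ : ℕ, a ^ ℓ * t ^ ((ℓ + 1) * α - 1) / Real.Gamma ((ℓ + 1) * α) :=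
      tsum_mul_left
    exact heq ▸ Summable.tsum_le_tsum hfg hf hg
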